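/- Let 0 < q, s < ∞ and C ≥ 1 be given. There exist constants C₁, C₂ > 0 depending only on C, s, q such that for all N, M ∈ ℕ with N ≤ M ≤ C·N, every analytic f on the unit disc and every 0 ≤ r < 1: C₁ ‖{(f_{[s]}(r))_{N,l}}_{l=0}^{N-1}‖_{ℓ^q} ≤ ‖{(f_{[s]}(r))_{M,l}}_{l=0}^{M-1}‖_{ℓ^q} ≤ C₂ ‖{(f_{[s]}(r))_{N,l}}_{l=0}^{N-1}‖_{ℓ^q}. -/

import Mathlib

open Real MeasureTheory

noncomputable def cpt (r θ : ℝ) : ℂ := (r : ℂ) * Complex.exp ((θ : ℂ) * Complex.I)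

/-- Block mean `(f_{[s]}(r))_{N,l} = (∫_{I_{N,l}} |f(re^{iθ})|^s dθ/2π)^{1/s}`. -/
noncomputable def blockMean (s r : ℝ) (f : ℂ → ℂ) (N l : ℕ) : ℝ :=
  (∫ θ in (2*π*l/N)..(2*π*(l+1)/N), ‖f (cpt r θ)‖ ^ s / (2*π)) ^ (1/s)

/-- for `0 < q, s < ∞` and `C ≥ 1` there are `C₁, C₂ > 0` such that
whenever `N ≤ M ≤ C·N`, the `ℓ^q` norms of the block means with `N` and with `M` arcs
are comparable, for every analytic `f` and every `0 ≤ r < 1`. -/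


-- spread lemma
lemma card_le_of_spread (S : Finset ℕ) (d : ℕ)
    (h : ∀ j1 ∈ S, ∀ j2 ∈ S, j1 ≤ j2 → j2 - j1 ≤ d) : S.card ≤ d + 1 := by
  rcases S.eq_empty_or_nonempty with hS | hS
  · simp [hS]
  · have hsub : S ⊆ Finset.Icc (S.min' hS) (S.min' hS + d) := by
      intro j hj
      have h1 := S.min'_le j hj
      have h2 := h _ (S.min'_mem hS) j hj h1
      simp only [Finset.mem_Icc]
      omega
    calc S.card ≤ (Finset.Icc (S.min' hS) (S.min' hS + d)).card := Finset.card_le_card hsub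
    _ = d + 1 := by rw [Nat.card_Icc]; omega

lemma sum_rpow_le_card_rpow {ι : Type*} (T : Finset ι) (A : ι → ℝ) (hA : ∀ i, 0 ≤ A i)
    (t : ℝ) (ht : 0 < t) (K : ℕ) (hK : T.card ≤ K) :
    (∑ i ∈ T, A i) ^ t ≤ (K : ℝ) ^ t * ∑ i ∈ T, A i ^ t := by
  have hsum_t : 0 ≤ ∑ i ∈ T, A i ^ t :=
    Finset.sum_nonneg fun i _ => Real.rpow_nonneg (hA i) t
  set m : ℝ := (∑ i ∈ T, A i ^ t) ^ (1/t) with hm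
  have hm0 : 0 ≤ m := Real.rpow_nonneg hsum_t _
  have hAm : ∀ i ∈ T, A i ≤ m := by
    intro i hi
    have h1 : A i ^ t ≤ ∑ i ∈ T, A i ^ t :=
      Finset.single_le_sum (fun i _ => Real.rpow_nonneg (hA i) t) hi
    have h2 := Real.rpow_le_rpow (Real.rpow_nonneg (hA i) t) h1 (by positivity : (0:ℝ) ≤ 1/t)
    rwa [← Real.rpow_mul (hA i), mul_one_div_cancel ht.ne', Real.rpow_one] at h2
  have hle : (∑ i ∈ T, A i) ≤ (K : ℝ) * m := by
    calc (∑ i ∈ T, A i) ≤ T.card • m := Finset.sum_le_card_nsmul T A m hAm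
    _ = (T.card : ℝ) * m := nsmul_eq_mul _ _
    _ ≤ (K : ℝ) * m := by
        apply mul_le_mul_of_nonneg_right _ hm0
        exact_mod_cast hK
  calc (∑ i ∈ T, A i) ^ t ≤ ((K : ℝ) * m) ^ t :=
        Real.rpow_le_rpow (Finset.sum_nonneg fun i _ => hA i) hle ht.le
  _ = (K : ℝ) ^ t * m ^ t := Real.mul_rpow (by positivity) hm0
  _ = (K : ℝ) ^ t * ∑ i ∈ T, A i ^ t := by
      rw [hm, ← Real.rpow_mul hsum_t, one_div_mul_cancel ht.ne', Real.rpow_one]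

lemma comb_lemma (M N K : ℕ) (A B : ℕ → ℝ) (hA : ∀ i, 0 ≤ A i) (hB : ∀ j, 0 ≤ B j)
    (t : ℝ) (ht : 0 < t) (T : ℕ → Finset ℕ)
    (hTsub : ∀ j, j < M → T j ⊆ Finset.range N)
    (hBT : ∀ j, j < M → B j ≤ ∑ i ∈ T j, A i)
    (hcard : ∀ j, j < M → (T j).card ≤ K)
    (hfib : ∀ i, i < N → ((Finset.range M).filter (fun j => i ∈ T j)).card ≤ K) :
    ∑ j ∈ Finset.range M, B j ^ t ≤ (K:ℝ) ^ t * K * ∑ i ∈ Finset.range N, A i ^ t := by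
  have step1 : ∑ j ∈ Finset.range M, B j ^ t
      ≤ (K:ℝ)^t * ∑ j ∈ Finset.range M, ∑ i ∈ T j, A i ^ t := by
    rw [Finset.mul_sum]
    refine Finset.sum_le_sum fun j hj => ?_
    have hj' := Finset.mem_range.mp hj
    calc B j ^ t ≤ (∑ i ∈ T j, A i) ^ t := Real.rpow_le_rpow (hB j) (hBT j hj') ht.le
    _ ≤ (K:ℝ)^t * ∑ i ∈ T j, A i ^ t := sum_rpow_le_card_rpow _ _ hA t ht K (hcard j hj')
  have step2 : ∑ j ∈ Finset.range M, ∑ i ∈ T j, A i ^ t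
      ≤ (K:ℝ) * ∑ i ∈ Finset.range N, A i ^ t := by
    have hrw : ∀ j ∈ Finset.range M,
        ∑ i ∈ T j, A i ^ t = ∑ i ∈ Finset.range N, if i ∈ T j then A i ^ t else 0 := by
      intro j hj
      rw [← Finset.sum_filter, Finset.filter_mem_eq_inter,
        Finset.inter_eq_right.mpr (hTsub j (Finset.mem_range.mp hj))]
    calc ∑ j ∈ Finset.range M, ∑ i ∈ T j, A i ^ t
        = ∑ j ∈ Finset.range M, ∑ i ∈ Finset.range N, if i ∈ T j then A i ^ t else 0 :=
          Finset.sum_congr rfl hrw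
    _ = ∑ i ∈ Finset.range N, ∑ j ∈ Finset.range M, if i ∈ T j then A i ^ t else 0 :=
          Finset.sum_comm
    _ ≤ ∑ i ∈ Finset.range N, (K:ℝ) * A i ^ t := by
        refine Finset.sum_le_sum fun i hi => ?_
        rw [← Finset.sum_filter, Finset.sum_const, nsmul_eq_mul]
        apply mul_le_mul_of_nonneg_right _ (Real.rpow_nonneg (hA i) t)
        exact_mod_cast hfib i (Finset.mem_range.mp hi)
    _ = (K:ℝ) * ∑ i ∈ Finset.range N, A i ^ t := (Finset.mul_sum _ _ _).symm
  calc ∑ j ∈ Finset.range M, B j ^ t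
      ≤ (K:ℝ)^t * ∑ j ∈ Finset.range M, ∑ i ∈ T j, A i ^ t := step1
  _ ≤ (K:ℝ)^t * ((K:ℝ) * ∑ i ∈ Finset.range N, A i ^ t) := by
      apply mul_le_mul_of_nonneg_left step2 (by positivity)
  _ = (K:ℝ)^t * K * ∑ i ∈ Finset.range N, A i ^ t := by ring


-- fibers of j ↦ j*N/M have card ≤ D when M ≤ D*N
lemma fib_card {M N D : ℕ} (hN : 0 < N) (hM : 0 < M) (hMD : M ≤ D * N) (v : ℕ) :
    ((Finset.range M).filter (fun j => j * N / M = v)).card ≤ D := by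
  have hD : 0 < D := by
    rcases Nat.eq_zero_or_pos D with h | h
    · subst h; simp at hMD; omega
    · exact h
  refine le_trans (card_le_of_spread _ (D - 1) ?_) (by omega)
  intro j1 h1 j2 h2 hle
  simp only [Finset.mem_filter, Finset.mem_range] at h1 h2
  have ha : v * M ≤ j1 * N := (Nat.le_div_iff_mul_le hM).mp h1.2.ge
  have hb : j2 * N < (v + 1) * M := (Nat.div_lt_iff_lt_mul hM).mp (by omega)
  by_contra hcon
  have h3 : j1 + D ≤ j2 := by omega
  have h4 : (j1 + D) * N ≤ j2 * N := Nat.mul_le_mul_right N h3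
  have h5 : (j1 + D) * N = j1 * N + D * N := by ring
  have h6 : (v + 1) * M = v * M + M := by ring
  omega

lemma j0_strictMono {M N : ℕ} (hN : 0 < N) (hNM : N ≤ M) :
    StrictMono (fun l : ℕ => l * M / N) := by
  apply strictMono_nat_of_lt_succ
  intro l
  have h1 : (l * M + N) / N = l * M / N + 1 := Nat.add_div_right _ hN
  have h2 : l * M + N ≤ (l + 1) * M := by
    have : (l + 1) * M = l * M + M := by ring
    omega
  have h3 := Nat.div_le_div_right (c := N) h2
  omega

lemma pt_le {u K v L : ℕ} (hK : 0 < K) (hL : 0 < L) (h : u * L ≤ v * K) :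
    2 * π * (u : ℝ) / K ≤ 2 * π * (v : ℝ) / L := by
  have hK' : (0:ℝ) < K := by exact_mod_cast hK
  have hL' : (0:ℝ) < L := by exact_mod_cast hL
  rw [div_le_div_iff₀ hK' hL']
  have h' : (u : ℝ) * L ≤ (v : ℝ) * K := by exact_mod_cast h
  nlinarith [Real.pi_pos]


/-- Core comparison lemma for block integrals of a nonnegative continuous function. -/
lemma block_core (g : ℝ → ℝ) (hg : Continuous g) (hg0 : ∀ x, 0 ≤ g x)
    (t : ℝ) (ht : 0 < t) (D : ℕ) (hD : 1 ≤ D)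
    (N M : ℕ) (hN : 0 < N) (hNM : N ≤ M) (hMD : M ≤ D * N) :
    (∑ j ∈ Finset.range M, (∫ θ in (2*π*(j:ℝ)/M)..(2*π*((j:ℝ)+1)/M), g θ) ^ t
       ≤ ((2*D : ℕ):ℝ)^t * ((2*D : ℕ):ℝ)
         * ∑ l ∈ Finset.range N, (∫ θ in (2*π*(l:ℝ)/N)..(2*π*((l:ℝ)+1)/N), g θ) ^ t)
  ∧ (∑ l ∈ Finset.range N, (∫ θ in (2*π*(l:ℝ)/N)..(2*π*((l:ℝ)+1)/N), g θ) ^ t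
       ≤ ((2*D : ℕ):ℝ)^t * ((2*D : ℕ):ℝ)
         * ∑ j ∈ Finset.range M, (∫ θ in (2*π*(j:ℝ)/M)..(2*π*((j:ℝ)+1)/M), g θ) ^ t) := by
  have hM : 0 < M := lt_of_lt_of_le hN hNM
  set AN : ℕ → ℝ := fun l => ∫ θ in (2*π*(l:ℝ)/N)..(2*π*((l:ℝ)+1)/N), g θ with hAN
  set BM : ℕ → ℝ := fun j => ∫ θ in (2*π*(j:ℝ)/M)..(2*π*((j:ℝ)+1)/M), g θ with hBM
  have hint : ∀ a b : ℝ, IntervalIntegrable g volume a b := fun a b => hg.intervalIntegrable a b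
  have hptcast : ∀ (u K : ℕ), 2*π*((u:ℝ)+1)/K = 2*π*((u+1 : ℕ):ℝ)/K := by
    intro u K; push_cast; ring
  have hA0 : ∀ l, 0 ≤ AN l := by
    intro l
    apply intervalIntegral.integral_nonneg _ (fun u _ => hg0 u)
    rw [hptcast]
    exact pt_le hN hN (Nat.mul_le_mul (Nat.le_succ l) (le_refl N))
  have hB0 : ∀ j, 0 ≤ BM j := by
    intro j
    apply intervalIntegral.integral_nonneg _ (fun u _ => hg0 u)
    rw [hptcast]
    exact pt_le hM hM (Nat.mul_le_mul (Nat.le_succ j) (le_refl M))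
  have hsum : ∀ (K : ℕ) (l m : ℕ), l ≤ m →
      ∑ i ∈ Finset.Ico l m, ∫ θ in (2*π*(i:ℝ)/K)..(2*π*((i:ℝ)+1)/K), g θ
        = ∫ θ in (2*π*(l:ℝ)/K)..(2*π*(m:ℝ)/K), g θ := by
    intro K l m hlm
    have := intervalIntegral.sum_integral_adjacent_intervals_Ico
      (a := fun k : ℕ => 2*π*(k:ℝ)/K) (μ := volume) (f := g) hlm
      (fun k _ => hint _ _)
    rw [← this]
    refine Finset.sum_congr rfl fun i _ => ?_
    rw [hptcast]
  have hae : ∀ (a b : ℝ), 0 ≤ᵐ[volume.restrict (Set.Ioc a b)] g :=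
    fun a b => Filter.Eventually.of_forall hg0
  constructor
  · -- fine (M) bounded by coarse (N)
    refine comb_lemma M N (2*D) AN BM hA0 hB0 t ht
      (fun j => Finset.Ico (j*N/M) (min (j*N/M + 1) (N-1) + 1)) ?_ ?_ ?_ ?_
    · intro j hj
      intro i hi
      simp only [Finset.mem_Ico] at hi
      simp only [Finset.mem_range]
      omega
    · intro j hj
      set l0 := j * N / M with hl0
      set l1 := min (l0 + 1) (N - 1) with hl1
      have hl0N : l0 < N := by
        apply (Nat.div_lt_iff_lt_mul hM).mpr
        calc j * N < M * N := mul_lt_mul_of_pos_right hj hN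
        _ = N * M := Nat.mul_comm M N
      have h1 : j * N < (l0 + 1) * M := (Nat.div_lt_iff_lt_mul hM).mp (Nat.lt_succ_self _)
      have hbdn : (j + 1) * N ≤ (l1 + 1) * M := by
        rcases le_or_gt (l0 + 1) (N - 1) with hc | hc
        · have he : l1 = l0 + 1 := min_eq_left hc
          rw [he]
          calc (j + 1) * N = j * N + N := by ring
          _ ≤ j * N + M := by omega
          _ ≤ (l0 + 1) * M + M := by omega
          _ = (l0 + 1 + 1) * M := by ring
        · have he : l1 = N - 1 := by omega
          rw [he, (by omega : N - 1 + 1 = N)]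
          calc (j + 1) * N ≤ M * N := Nat.mul_le_mul (by omega) (le_refl N)
          _ = N * M := Nat.mul_comm M N
      -- now the interval inclusion
      have hsplit := hsum N l0 (l1 + 1) (by omega)
      show BM j ≤ ∑ i ∈ Finset.Ico l0 (l1 + 1), AN i
      rw [hAN, hsplit]
      rw [hBM]
      simp only []
      rw [hptcast j M]
      apply intervalIntegral.integral_mono_interval _ _ _ (hae _ _) (hint _ _)
      · exact pt_le hN hM (Nat.div_mul_le_self (j * N) M)
      · exact pt_le hM hM (Nat.mul_le_mul (Nat.le_succ j) (le_refl M))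
      · exact pt_le hM hN hbdn
    · intro j hj
      set w := j * N / M with hw
      clear_value w
      clear hw
      rw [Nat.card_Ico]
      have : min (w + 1) (N - 1) ≤ w + 1 := min_le_left _ _
      omega
    · intro i hi
      set F := (Finset.range M).filter
        (fun j => i ∈ Finset.Ico (j*N/M) (min (j*N/M + 1) (N-1) + 1)) with hF
      have hsub : F ⊆ ((Finset.range M).filter (fun j => j * N / M = i))
          ∪ ((Finset.range M).filter (fun j => j * N / M = i - 1)) := by
        intro j hj
        simp only [hF, Finset.mem_filter, Finset.mem_union, Finset.mem_range,
          Finset.mem_Ico] at hj ⊢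
        set w := j * N / M with hw
        clear_value w
        clear hw
        obtain ⟨hj1, hj2, hj3⟩ := hj
        have hj4 : i ≤ min (w + 1) (N - 1) := by omega
        obtain ⟨h5, h6⟩ := le_min_iff.mp hj4
        omega
      calc F.card ≤ _ := Finset.card_le_card hsub
      _ ≤ ((Finset.range M).filter (fun j => j * N / M = i)).card
          + ((Finset.range M).filter (fun j => j * N / M = i - 1)).card :=
            Finset.card_union_le _ _
      _ ≤ D + D := Nat.add_le_add (fib_card hN hM hMD i) (fib_card hN hM hMD (i-1))
      _ = 2 * D := by ring
  · -- coarse (N) bounded by fine (M)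
    refine comb_lemma N M (2*D) BM AN hB0 hA0 t ht
      (fun l => Finset.Ico (l*M/N) (min (l*M/N + (D+1)) M)) ?_ ?_ ?_ ?_
    · intro l hl i hi
      simp only [Finset.mem_Ico] at hi
      simp only [Finset.mem_range]
      omega
    · intro l hl
      set j0 := l * M / N with hj0
      have hj0M : j0 < M := by
        apply (Nat.div_lt_iff_lt_mul hN).mpr
        calc l * M < N * M := mul_lt_mul_of_pos_right hl hM
        _ = M * N := Nat.mul_comm _ _
      set je := min (j0 + (D + 1)) M with hje
      have h1 : l * M < (j0 + 1) * N := (Nat.div_lt_iff_lt_mul hN).mp (Nat.lt_succ_self _)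
      have hbdn : (l + 1) * M ≤ je * N := by
        rcases le_or_gt (j0 + (D + 1)) M with hc | hc
        · have he : je = j0 + (D + 1) := min_eq_left hc
          rw [he]
          have e1 : (l + 1) * M = l * M + M := by ring
          have e2 : (j0 + 1) * N = j0 * N + N := by ring
          have e3 : (j0 + (D + 1)) * N = j0 * N + N + D * N := by ring
          omega
        · have he : je = M := min_eq_right (by omega)
          rw [he]
          calc (l + 1) * M = M * (l + 1) := Nat.mul_comm _ _
          _ ≤ M * N := Nat.mul_le_mul (le_refl M) (by omega)
      have hsplit := hsum M j0 je (by omega)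
      show AN l ≤ ∑ i ∈ Finset.Ico j0 je, BM i
      rw [hBM, hsplit, hAN]
      simp only []
      rw [hptcast l N]
      apply intervalIntegral.integral_mono_interval _ _ _ (hae _ _) (hint _ _)
      · exact pt_le hM hN (Nat.div_mul_le_self (l * M) N)
      · exact pt_le hN hN (Nat.mul_le_mul (Nat.le_succ l) (le_refl N))
      · exact pt_le hN hM hbdn
    · intro l hl
      set w := l * M / N with hw
      clear_value w
      clear hw
      rw [Nat.card_Ico]
      have : min (w + (D + 1)) M ≤ w + (D + 1) := min_le_left _ _
      omega
    · intro j hj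
      have hmono := j0_strictMono hN hNM
      have hle : ((Finset.range N).filter
          (fun l => j ∈ Finset.Ico (l*M/N) (min (l*M/N + (D+1)) M))).card
          ≤ (Finset.Icc (j - D) j).card := by
        apply Finset.card_le_card_of_injOn (fun l => l * M / N)
        · intro l hl
          simp only [Finset.mem_coe, Finset.mem_filter, Finset.mem_Ico, Finset.mem_range] at hl
          simp only [Finset.mem_coe, Finset.mem_Icc]
          set w := l * M / N with hw
          clear_value w
          clear hw
          obtain ⟨hl1, hl2, hl3⟩ := hl
          obtain ⟨h5, h6⟩ := lt_min_iff.mp hl3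
          omega
        · exact fun a _ b _ hab => hmono.injective hab
      calc _ ≤ (Finset.Icc (j - D) j).card := hle
      _ ≤ 2 * D := by rw [Nat.card_Icc]; omega




theorem statement12 (q s C : ℝ) (hq : 0 < q) (hs : 0 < s) (hC : 1 ≤ C) :
    ∃ C₁ C₂ : ℝ, 0 < C₁ ∧ 0 < C₂ ∧
      ∀ N M : ℕ, 0 < N → N ≤ M → (M : ℝ) ≤ C * N →
      ∀ f : ℂ → ℂ, DifferentiableOn ℂ f (Metric.ball 0 1) →
      ∀ r : ℝ, 0 ≤ r → r < 1 →
        C₁ * (∑ l ∈ Finset.range N, blockMean s r f N l ^ q) ^ (1/q)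
            ≤ (∑ l ∈ Finset.range M, blockMean s r f M l ^ q) ^ (1/q) ∧
        (∑ l ∈ Finset.range M, blockMean s r f M l ^ q) ^ (1/q)
            ≤ C₂ * (∑ l ∈ Finset.range N, blockMean s r f N l ^ q) ^ (1/q) := by
  set t : ℝ := q / s with hts
  have ht : 0 < t := div_pos hq hs
  set D : ℕ := ⌊C⌋₊ + 1 with hD
  set Kc : ℝ := ((2*D : ℕ):ℝ)^t * ((2*D : ℕ):ℝ) with hKc
  have hKpos : (0:ℝ) < ((2*D : ℕ):ℝ) := by positivity
  have hKcpos : 0 < Kc := by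
    apply mul_pos _ hKpos
    exact Real.rpow_pos_of_pos hKpos t
  refine ⟨(Kc ^ (1/q))⁻¹, Kc ^ (1/q), by positivity, by positivity, ?_⟩
  intro N M hN hNM hMC f hf r hr0 hr1
  have hM : 0 < M := lt_of_lt_of_le hN hNM
  -- M ≤ D * N in ℕ
  have hMD : M ≤ D * N := by
    have hDcast : (D:ℝ) = (⌊C⌋₊ : ℝ) + 1 := by rw [hD]; push_cast; ring
    have h1 : (M:ℝ) < (D:ℝ) * N := by
      rw [hDcast]
      refine lt_of_le_of_lt hMC ?_
      apply mul_lt_mul_of_pos_right (Nat.lt_floor_add_one C)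
      exact_mod_cast hN
    have h2 : (M:ℝ) < ((D * N : ℕ) : ℝ) := by
      rw [hDcast] at h1; push_cast; rw [hDcast]; linarith
    exact_mod_cast h2.le
  -- the function g
  set g : ℝ → ℝ := fun θ => ‖f (cpt r θ)‖ ^ s / (2*π) with hg
  have hcpt : Continuous fun θ : ℝ => cpt r θ := by
    unfold cpt
    exact continuous_const.mul (Complex.continuous_exp.comp
      (Complex.continuous_ofReal.mul continuous_const))
  have hmem : ∀ θ : ℝ, cpt r θ ∈ Metric.ball (0:ℂ) 1 := by
    intro θ
    rw [mem_ball_zero_iff]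
    unfold cpt
    rw [norm_mul, Complex.norm_exp_ofReal_mul_I, mul_one,
      Complex.norm_real, Real.norm_eq_abs, abs_of_nonneg hr0]
    exact hr1
  have hgf : Continuous fun θ : ℝ => f (cpt r θ) :=
    (hf.continuousOn).comp_continuous hcpt hmem
  have hgc : Continuous g := by
    apply Continuous.div_const
    exact (hgf.norm).rpow_const fun x => Or.inr hs.le
  have hg0 : ∀ x, 0 ≤ g x := by
    intro x
    apply div_nonneg _ (by positivity)
    exact Real.rpow_nonneg (norm_nonneg _) s
  have habK : ∀ (K : ℕ) (l : ℕ), 2*π*(l:ℝ)/K ≤ 2*π*((l:ℝ)+1)/K := by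
    intro K l
    have hπ := Real.pi_pos
    have hK' : (0:ℝ) ≤ K := by positivity
    gcongr
    linarith
  -- rewrite blockMean ^ q
  have hrw : ∀ (K : ℕ), 0 < K → ∀ l : ℕ,
      blockMean s r f K l ^ q = (∫ θ in (2*π*(l:ℝ)/K)..(2*π*((l:ℝ)+1)/K), g θ) ^ t := by
    intro K hK l
    unfold blockMean
    have hab : 2*π*(l:ℝ)/K ≤ 2*π*((l:ℝ)+1)/K := habK K l
    have hint0 : 0 ≤ ∫ θ in (2*π*(l:ℝ)/K)..(2*π*((l:ℝ)+1)/K), g θ :=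
      intervalIntegral.integral_nonneg hab (fun u _ => hg0 u)
    show ((∫ θ in (2*π*(l:ℝ)/K)..(2*π*((l:ℝ)+1)/K), g θ) ^ (1/s)) ^ q = _
    rw [← Real.rpow_mul hint0, (by field_simp : 1/s*q = q/s)]
  -- apply core lemma
  obtain ⟨hup, hdown⟩ := block_core g hgc hg0 t ht D (by omega) N M hN hNM hMD
  have eN : ∑ l ∈ Finset.range N, blockMean s r f N l ^ q
      = ∑ l ∈ Finset.range N, (∫ θ in (2*π*(l:ℝ)/N)..(2*π*((l:ℝ)+1)/N), g θ) ^ t :=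
    Finset.sum_congr rfl fun l _ => hrw N hN l
  have eM : ∑ l ∈ Finset.range M, blockMean s r f M l ^ q
      = ∑ l ∈ Finset.range M, (∫ θ in (2*π*(l:ℝ)/M)..(2*π*((l:ℝ)+1)/M), g θ) ^ t :=
    Finset.sum_congr rfl fun l _ => hrw M hM l
  rw [eN, eM]
  set SN := ∑ l ∈ Finset.range N, (∫ θ in (2*π*(l:ℝ)/N)..(2*π*((l:ℝ)+1)/N), g θ) ^ t with hSN
  set SM := ∑ l ∈ Finset.range M, (∫ θ in (2*π*(l:ℝ)/M)..(2*π*((l:ℝ)+1)/M), g θ) ^ t with hSM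
  have hSN0 : 0 ≤ SN := Finset.sum_nonneg fun l _ => Real.rpow_nonneg
    (intervalIntegral.integral_nonneg (habK N l) (fun u _ => hg0 u)) t
  have hSM0 : 0 ≤ SM := Finset.sum_nonneg fun l _ => Real.rpow_nonneg
    (intervalIntegral.integral_nonneg (habK M l) (fun u _ => hg0 u)) t
  have hq' : (0:ℝ) ≤ 1/q := by positivity
  constructor
  · -- lower bound
    have h := Real.rpow_le_rpow hSN0 hdown hq'
    rw [Real.mul_rpow hKcpos.le hSM0] at h
    calc (Kc ^ (1/q))⁻¹ * SN ^ (1/q) ≤ (Kc ^ (1/q))⁻¹ * (Kc ^ (1/q) * SM ^ (1/q)) := by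
          apply mul_le_mul_of_nonneg_left h (by positivity)
    _ = SM ^ (1/q) := by
          rw [← mul_assoc, inv_mul_cancel₀ (by positivity), one_mul]
  · -- upper bound
    have h := Real.rpow_le_rpow hSM0 hup hq'
    rw [Real.mul_rpow hKcpos.le hSN0] at h
    exact h
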